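/- Let k be an algebraically closed field, Q a quiver, and δ an isotropic Schur root of Q (⟨δ,δ⟩ = 0 and there exists a representation of dimension vector δ with endomorphism ring k·id) such that sl(δ) = 1, i.e. every indecomposable representation of dimension vector δ has endomorphism ring k·id. Define Θ_δ := ⟨−,δ⟩ − ⟨δ,−⟩. Then: (1) every indecomposable representation M of dimension vector δ is Θ_δ-semistable; and (2) an indecomposable representation M of dimension vector δ is not Θ_δ-stable if and only if there exists a non-split short exact sequence 0 → U → M → V → 0 in which U and V are exceptional representations (End = k·id and self-extension-free, dim Ext(U,U) = dim Ext(V,V) = 0) with Hom(U,V) = Hom(V,U) = 0 and dim Ext(U,V) = dim Ext(V,U) = 1. -/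

import Mathlib

namespace QuivRep

variable (k : Type) [Field k] {V A : Type} (s t : A → V)

/-- `RSp k s t X Y` is R(N,M) = ⊕_{a∈Q_1} Hom_k(N_{s(a)}, M_{t(a)}) where the
representation `N` has vertex spaces `X` and `M` has vertex spaces `Y`. -/
abbrev RSp (X Y : V → Type) [∀ q, AddCommGroup (X q)] [∀ q, Module k (X q)]
    [∀ q, AddCommGroup (Y q)] [∀ q, Module k (Y q)] : Type :=
  ∀ a : A, X (s a) →ₗ[k] Y (t a)

variable {X Y : V → Type}
  [∀ q, AddCommGroup (X q)] [∀ q, Module k (X q)]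
  [∀ q, AddCommGroup (Y q)] [∀ q, Module k (Y q)]

/-- The linear map `d_{N,M}` whose cokernel is Ext(N,M). Here `Nm` are the arrow
maps of `N` (on spaces `X`) and `Mm` those of `M` (on spaces `Y`). -/
def dMap (Nm : RSp k s t X X) (Mm : RSp k s t Y Y) :
    (∀ q, X q →ₗ[k] Y q) →ₗ[k] RSp k s t X Y where
  toFun f := fun a => (f (t a)).comp (Nm a) - (Mm a).comp (f (s a))
  map_add' f g := by
    funext a; ext x
    simp only [Pi.add_apply, LinearMap.add_comp, LinearMap.comp_add, LinearMap.sub_apply,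
      LinearMap.add_apply, LinearMap.comp_apply]
    abel
  map_smul' c f := by
    funext a; ext x
    simp [smul_sub]

/-- `f : M → N` is a morphism of representations (`M` on spaces `X`, `N` on spaces `Y`). -/
def IsRHom (Mm : RSp k s t X X) (Nm : RSp k s t Y Y) (f : ∀ q, X q →ₗ[k] Y q) : Prop :=
  ∀ a, (f (t a)).comp (Mm a) = (Nm a).comp (f (s a))

/-- Isomorphism of representations. -/
def RIso (Mm : RSp k s t X X) (Nm : RSp k s t Y Y) : Prop :=
  ∃ f : ∀ q, X q →ₗ[k] Y q, IsRHom k s t Mm Nm f ∧ ∀ q, Function.Bijective (f q)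

/-- A family of submodules is a subrepresentation. -/
def IsSubRep (Mm : RSp k s t X X) (U : ∀ q, Submodule k (X q)) : Prop :=
  ∀ a, ∀ x ∈ U (s a), Mm a x ∈ U (t a)

/-- Indecomposability: nonzero, and no nontrivial internal direct sum decomposition. -/
def Indec (Mm : RSp k s t X X) : Prop :=
  (∃ q, ∃ x : X q, x ≠ 0) ∧
  ∀ U W : ∀ q, Submodule k (X q), IsSubRep k s t Mm U → IsSubRep k s t Mm W →
    (∀ q, U q ⊓ W q = ⊥) → (∀ q, U q ⊔ W q = ⊤) →
    (∀ q, U q = ⊥) ∨ (∀ q, W q = ⊥)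

/-- The middle term `B(f,λ,μ)` of the extension determined by `f ∈ R(N,M)`:
vertex spaces `Y q × X q`, arrow maps `[[Mm, f],[0, Nm]]`. -/
def BExt (Mm : RSp k s t Y Y) (Nm : RSp k s t X X) (f : RSp k s t X Y) :
    RSp k s t (fun q => Y q × X q) (fun q => Y q × X q) :=
  fun a => LinearMap.prod
    ((Mm a).comp (LinearMap.fst k (Y (s a)) (X (s a))) +
      (f a).comp (LinearMap.snd k (Y (s a)) (X (s a))))
    ((Nm a).comp (LinearMap.snd k (Y (s a)) (X (s a))))

/-- `U` is strong: every deformation `M(λ)`, `λ ∈ U`, is indecomposable. -/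
def Strong (Mm : RSp k s t X X) (U : Set (RSp k s t X X)) : Prop :=
  ∀ lam ∈ U, Indec k s t (Mm + lam)

/-- `U` is separating: `M(λ) ≅ M(μ)` implies `λ = μ` for `λ, μ ∈ U`. -/
def Separating (Mm : RSp k s t X X) (U : Set (RSp k s t X X)) : Prop :=
  ∀ lam ∈ U, ∀ mu ∈ U, RIso k s t (Mm + lam) (Mm + mu) → lam = mu

/-- `End(M) = k·id`. -/
def EndTrivial (Mm : RSp k s t X X) : Prop :=
  ∀ f : ∀ q, X q →ₗ[k] X q, IsRHom k s t Mm Mm f → ∃ c : k, ∀ q, f q = c • LinearMap.id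

/-- `Hom(M,N) = 0`. -/
def HomZero (Mm : RSp k s t X X) (Nm : RSp k s t Y Y) : Prop :=
  ∀ f : ∀ q, X q →ₗ[k] Y q, IsRHom k s t Mm Nm f → f = 0

end QuivRep


open QuivRep

section Slopes

variable {k : Type} [Field k] {V A : Type} [Fintype V] [Fintype A] (s t : A → V)

/-- The Euler form `⟨β,β'⟩ = Σ_q β_q β'_q − Σ_a β_{s(a)} β'_{t(a)}`. -/
def euler (β β' : V → ℕ) : ℤ :=
  ∑ q, (β q : ℤ) * (β' q : ℤ) - ∑ a, (β (s a) : ℤ) * (β' (t a) : ℤ)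

/-- The slope `μ(β) = (Σ_q Θ_q β_q)/(Σ_q β_q)` of a dimension vector. -/
noncomputable def slopeDV (Θ : V → ℤ) (β : V → ℕ) : ℚ :=
  (∑ q, (Θ q : ℚ) * (β q : ℚ)) / (∑ q, (β q : ℚ))

/-- The standard vertex spaces of dimension vector `β`. -/
abbrev stdSp (k : Type) (β : V → ℕ) : V → Type := fun q => Fin (β q) → k

/-- `β` is a root: there is an indecomposable representation of dimension vector `β`. -/
def IsRoot (β : V → ℕ) : Prop :=
  ∃ m : RSp k s t (stdSp k β) (stdSp k β), Indec k s t m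

variable {X : V → Type}
  [∀ q, AddCommGroup (X q)] [∀ q, Module k (X q)] [∀ q, FiniteDimensional k (X q)]

/-- The slope of a family of submodules. -/
noncomputable def slopeSub (Θ : V → ℤ) (U : ∀ q, Submodule k (X q)) : ℚ :=
  (∑ q, (Θ q : ℚ) * (Module.finrank k (U q) : ℚ)) /
    (∑ q, (Module.finrank k (U q) : ℚ))

/-- The subrepresentation structure on a stable family of submodules. -/
def subRep (Mm : RSp k s t X X) (U : ∀ q, Submodule k (X q))
    (hU : IsSubRep k s t Mm U) :
    RSp k s t (fun q => ↥(U q)) (fun q => ↥(U q)) :=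
  fun a => (Mm a).restrict (hU a)

/-- The quotient representation `M/U`. -/
def quotRep (Mm : RSp k s t X X) (U : ∀ q, Submodule k (X q))
    (hU : IsSubRep k s t Mm U) :
    RSp k s t (fun q => X q ⧸ U q) (fun q => X q ⧸ U q) :=
  fun a => Submodule.mapQ (U (s a)) (U (t a)) (Mm a) (fun x hx => hU a x hx)

/-- `M` is `Θ`-semistable (slope stability). -/
def Semistable (Θ : V → ℤ) (Mm : RSp k s t X X) : Prop :=
  ∀ W : ∀ q, Submodule k (X q), IsSubRep k s t Mm W → (∃ q, W q ≠ ⊥) →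
    slopeSub Θ W ≤ slopeDV Θ (fun q => Module.finrank k (X q))

/-- `M` is `Θ`-stable (slope stability). -/
def StableSl (Θ : V → ℤ) (Mm : RSp k s t X X) : Prop :=
  ∀ W : ∀ q, Submodule k (X q), IsSubRep k s t Mm W → (∃ q, W q ≠ ⊥) →
    (¬ ∀ q, W q = ⊤) →
    slopeSub Θ W < slopeDV Θ (fun q => Module.finrank k (X q))

end Slopes

/-- The linear form `Θ_δ = ⟨−,δ⟩ − ⟨δ,−⟩`, evaluated on a dimension vector. -/
def thetaD {V A : Type} [Fintype V] [Fintype A] (s t : A → V) (δ β : V → ℕ) : ℤ :=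
  euler s t β δ - euler s t δ β

section Aux
set_option linter.unusedSectionVars false

open Module Submodule LinearMap QuivRep

namespace QAux

variable {k : Type} [Field k] {V A : Type} (s t : A → V)

section NoFin

variable {X Y : V → Type}
  [∀ q, AddCommGroup (X q)] [∀ q, Module k (X q)]
  [∀ q, AddCommGroup (Y q)] [∀ q, Module k (Y q)]

lemma dMap_app (Nm : RSp k s t X X) (Mm : RSp k s t Y Y) (f : ∀ q, X q →ₗ[k] Y q) (a : A)
    (x : X (s a)) :
    dMap k s t Nm Mm f a x = f (t a) (Nm a x) - Mm a (f (s a) x) := rfl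

lemma dMap_eq_zero_iff {Nm : RSp k s t X X} {Mm : RSp k s t Y Y} {f : ∀ q, X q →ₗ[k] Y q} :
    dMap k s t Nm Mm f = 0 ↔ IsRHom k s t Nm Mm f := by
  constructor
  · intro h a
    have ha := congrFun h a
    exact sub_eq_zero.mp ha
  · intro h
    funext a
    exact sub_eq_zero.mpr (h a)

lemma homZero_iff {Nm : RSp k s t X X} {Mm : RSp k s t Y Y} :
    HomZero k s t Nm Mm ↔ LinearMap.ker (dMap k s t Nm Mm) = ⊥ := by
  constructor
  · intro h
    refine (Submodule.eq_bot_iff _).2 (fun f hf => ?_)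
    exact h f ((dMap_eq_zero_iff s t).1 (LinearMap.mem_ker.1 hf))
  · intro h f hf
    have : f ∈ LinearMap.ker (dMap k s t Nm Mm) :=
      LinearMap.mem_ker.2 ((dMap_eq_zero_iff s t).2 hf)
    rw [h] at this
    simpa using this

lemma ker_dMap_self_eq_span {Nm : RSp k s t X X} (hEnd : EndTrivial k s t Nm) :
    LinearMap.ker (dMap k s t Nm Nm)
      = k ∙ (fun q => (LinearMap.id : X q →ₗ[k] X q)) := by
  apply le_antisymm
  · intro f hf
    obtain ⟨c, hc⟩ := hEnd f ((dMap_eq_zero_iff s t).1 (LinearMap.mem_ker.1 hf))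
    refine (Submodule.mem_span_singleton).2 ⟨c, ?_⟩
    funext q
    exact (hc q).symm
  · rw [Submodule.span_singleton_le_iff_mem]
    refine LinearMap.mem_ker.2 ((dMap_eq_zero_iff s t).2 ?_)
    intro a
    ext x
    simp

end NoFin

section FinD

variable [Fintype V] [Fintype A] {X Y : V → Type}
  [∀ q, AddCommGroup (X q)] [∀ q, Module k (X q)] [∀ q, FiniteDimensional k (X q)]
  [∀ q, AddCommGroup (Y q)] [∀ q, Module k (Y q)] [∀ q, FiniteDimensional k (Y q)]

lemma finrank_ker_dMap_self {Nm : RSp k s t X X} (hEnd : EndTrivial k s t Nm)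
    (hnz : ∃ q, ∃ x : X q, x ≠ 0) :
    finrank k (LinearMap.ker (dMap k s t Nm Nm)) = 1 := by
  rw [ker_dMap_self_eq_span s t hEnd]
  apply finrank_span_singleton
  intro h0
  obtain ⟨q, x, hx⟩ := hnz
  have h1 := congrFun h0 q
  exact hx (by simpa using LinearMap.congr_fun h1 x)

lemma finrank_ker_of_homZero {Nm : RSp k s t X X} {Mm : RSp k s t Y Y}
    (h : HomZero k s t Nm Mm) :
    finrank k (LinearMap.ker (dMap k s t Nm Mm)) = 0 := by
  rw [(homZero_iff s t).1 h]
  exact finrank_bot k _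

lemma euler_eq_hom_sub_ext (Nm : RSp k s t X X) (Mm : RSp k s t Y Y) :
    euler s t (fun q => finrank k (X q)) (fun q => finrank k (Y q))
      = (finrank k (LinearMap.ker (dMap k s t Nm Mm)) : ℤ)
        - (finrank k ((RSp k s t X Y) ⧸ LinearMap.range (dMap k s t Nm Mm)) : ℤ) := by
  have h1 : finrank k (∀ q, X q →ₗ[k] Y q) = ∑ q, finrank k (X q) * finrank k (Y q) := by
    rw [Module.finrank_pi_fintype]
    exact Finset.sum_congr rfl fun q _ => Module.finrank_linearMap k k (X q) (Y q)
  have h2 : finrank k (RSp k s t X Y) = ∑ a, finrank k (X (s a)) * finrank k (Y (t a)) := by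
    rw [Module.finrank_pi_fintype]
    exact Finset.sum_congr rfl fun a _ => Module.finrank_linearMap k k (X (s a)) (Y (t a))
  have h3 := LinearMap.finrank_range_add_finrank_ker (dMap k s t Nm Mm)
  have h4 := Submodule.finrank_quotient_add_finrank (LinearMap.range (dMap k s t Nm Mm))
  have e1 : (∑ q, ((finrank k (X q) : ℤ) * (finrank k (Y q) : ℤ)))
      = ((finrank k (∀ q, X q →ₗ[k] Y q) : ℕ) : ℤ) := by
    rw [h1]; push_cast; rfl
  have e2 : (∑ a, ((finrank k (X (s a)) : ℤ) * (finrank k (Y (t a)) : ℤ)))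
      = ((finrank k (RSp k s t X Y) : ℕ) : ℤ) := by
    rw [h2]; push_cast; rfl
  unfold euler
  rw [e1, e2]
  omega

end FinD

end QAux

end Aux
section Aux2
set_option linter.unusedSectionVars false
set_option maxHeartbeats 1000000

open Module Submodule LinearMap QuivRep

namespace QAux

variable {k : Type} [Field k] {V A : Type} (s t : A → V)
variable [Fintype V] [Fintype A] {X : V → Type}
  [∀ q, AddCommGroup (X q)] [∀ q, Module k (X q)] [∀ q, FiniteDimensional k (X q)]
  (Mm : RSp k s t X X) (U : ∀ q, Submodule k (X q)) (hU : IsSubRep k s t Mm U)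

lemma subRep_coe (a : A) (x : U (s a)) :
    ((subRep s t Mm U hU a x : X (t a))) = Mm a (x : X (s a)) := rfl

lemma quotRep_mk (a : A) (x : X (s a)) :
    quotRep s t Mm U hU a (Submodule.Quotient.mk x) = Submodule.Quotient.mk (Mm a x) :=
  Submodule.mapQ_apply _ _ _ _

/-- Hom(M, U) = 0 for U a proper subrepresentation of the Schurian M. -/
lemma homZero_M_sub (hEnd : EndTrivial k s t Mm) (hproper : ¬ ∀ q, U q = ⊤) :
    HomZero k s t Mm (subRep s t Mm U hU) := by
  intro f hf
  have hFhom : IsRHom k s t Mm Mm (fun q => (U q).subtype ∘ₗ f q) := by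
    intro a
    ext x
    have h1 := LinearMap.congr_fun (hf a) x
    simp only [LinearMap.comp_apply] at h1 ⊢
    rw [h1]
    rfl
  obtain ⟨c, hc⟩ := hEnd _ hFhom
  by_cases hc0 : c = 0
  · funext q
    ext x
    have h2 := LinearMap.congr_fun (hc q) x
    simp only [LinearMap.comp_apply, LinearMap.smul_apply, LinearMap.id_apply, hc0,
      zero_smul] at h2
    have : f q x = 0 := by
      apply Subtype.ext
      simpa using h2
    simpa using this
  · exfalso
    apply hproper
    intro q
    rw [Submodule.eq_top_iff']
    intro x
    have h2 := LinearMap.congr_fun (hc q) x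
    simp only [LinearMap.comp_apply, LinearMap.smul_apply, LinearMap.id_apply] at h2
    have hmem : c • x ∈ U q := by
      rw [← h2]
      exact SetLike.coe_mem _
    have h3 := (U q).smul_mem c⁻¹ hmem
    rwa [inv_smul_smul₀ hc0] at h3

/-- Hom(M/U, M) = 0 for U a nonzero subrepresentation of the Schurian M. -/
lemma homZero_quot_M (hEnd : EndTrivial k s t Mm) (hnz : ∃ q, U q ≠ ⊥) :
    HomZero k s t (quotRep s t Mm U hU) Mm := by
  intro f hf
  have hFhom : IsRHom k s t Mm Mm (fun q => f q ∘ₗ (U q).mkQ) := by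
    intro a
    ext x
    have h1 := LinearMap.congr_fun (hf a) (Submodule.Quotient.mk x)
    simp only [LinearMap.comp_apply] at h1 ⊢
    rw [quotRep_mk] at h1
    simpa using h1
  obtain ⟨c, hc⟩ := hEnd _ hFhom
  obtain ⟨q1, hq1⟩ := hnz
  obtain ⟨x, hx, hx0⟩ := (Submodule.ne_bot_iff _).1 hq1
  have h2 := LinearMap.congr_fun (hc q1) x
  have hmk : ((U q1).mkQ x : X q1 ⧸ U q1) = 0 := by
    simpa using (Submodule.Quotient.mk_eq_zero _).2 hx
  simp only [LinearMap.comp_apply, hmk, map_zero, LinearMap.smul_apply,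
    LinearMap.id_apply] at h2
  have hc0 : c = 0 := by
    rcases smul_eq_zero.1 h2.symm with h | h
    · exact h
    · exact absurd h hx0
  funext q
  apply Submodule.linearMap_qext
  ext y
  have h3 := LinearMap.congr_fun (hc q) y
  simp only [LinearMap.comp_apply, LinearMap.smul_apply, LinearMap.id_apply, hc0,
    zero_smul] at h3
  simpa using h3

end QAux

end Aux2
section Aux3
set_option linter.unusedSectionVars false
set_option maxHeartbeats 1000000

open Module Submodule LinearMap QuivRep

namespace QAux

variable {k : Type} [Field k] {V A : Type} (s t : A → V)
variable [Fintype V] [Fintype A] {X : V → Type}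
  [∀ q, AddCommGroup (X q)] [∀ q, Module k (X q)] [∀ q, FiniteDimensional k (X q)]
  (Mm : RSp k s t X X) (U : ∀ q, Submodule k (X q)) (hU : IsSubRep k s t Mm U)

/-- If Ext(M,U) = 0 then Ext(U,U) = 0. -/
lemma range_dMap_sub_sub_eq_top
    (hMU : LinearMap.range (dMap k s t Mm (subRep s t Mm U hU)) = ⊤) :
    LinearMap.range (dMap k s t (subRep s t Mm U hU) (subRep s t Mm U hU)) = ⊤ := by
  rw [LinearMap.range_eq_top]
  intro η
  have hpr : ∀ q, ∃ pr : X q →ₗ[k] (U q), pr ∘ₗ (U q).subtype = LinearMap.id :=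
    fun q => (U q).subtype.exists_leftInverse_of_injective (Submodule.ker_subtype _)
  choose pr hpr using hpr
  obtain ⟨g, hg⟩ := (LinearMap.range_eq_top.1 hMU) (fun a => η a ∘ₗ pr (s a))
  refine ⟨fun q => g q ∘ₗ (U q).subtype, ?_⟩
  funext a
  refine LinearMap.ext fun x => Subtype.ext ?_
  have h1 := LinearMap.congr_fun (congrFun hg a) ((x : X (s a)))
  have hx' : pr (s a) (x : X (s a)) = x := LinearMap.congr_fun (hpr (s a)) x
  simp only [dMap_app, LinearMap.comp_apply, hx'] at h1
  exact congrArg Subtype.val h1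

/-- If Ext(M/U, M) = 0 and End(M) = k, every morphism U → M is a multiple of the
inclusion. -/
lemma hom_sub_to_M (hEnd : EndTrivial k s t Mm)
    (hVM : LinearMap.range (dMap k s t (quotRep s t Mm U hU) Mm) = ⊤)
    (g : ∀ q, (U q) →ₗ[k] X q) (hg : IsRHom k s t (subRep s t Mm U hU) Mm g) :
    ∃ c : k, ∀ q, g q = c • (U q).subtype := by
  have hpr : ∀ q, ∃ pr : X q →ₗ[k] (U q), pr ∘ₗ (U q).subtype = LinearMap.id :=
    fun q => (U q).subtype.exists_leftInverse_of_injective (Submodule.ker_subtype _)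
  choose pr hpr using hpr
  -- the defect of the linear extension of g
  set gt : ∀ q, X q →ₗ[k] X q := fun q => g q ∘ₗ pr q with hgt
  have hker : ∀ a, U (s a) ≤ LinearMap.ker (dMap k s t Mm Mm gt a) := by
    intro a x hx
    rw [LinearMap.mem_ker, dMap_app]
    have h1 : pr (t a) (Mm a x) = subRep s t Mm U hU a ⟨x, hx⟩ := by
      have := LinearMap.congr_fun (hpr (t a)) (subRep s t Mm U hU a ⟨x, hx⟩)
      simp at this; exact this
    have h2 : pr (s a) x = ⟨x, hx⟩ := by
      have := LinearMap.congr_fun (hpr (s a)) ⟨x, hx⟩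
      simpa using this
    have h3 := LinearMap.congr_fun (hg a) ⟨x, hx⟩
    simp only [LinearMap.comp_apply] at h3
    simp only [hgt, LinearMap.comp_apply, h1, h2, sub_eq_zero]
    exact h3
  -- factor the defect through the quotient
  set xibar : RSp k s t (fun q => X q ⧸ U q) X :=
    fun a => (U (s a)).liftQ (dMap k s t Mm Mm gt a) (hker a) with hxibar
  obtain ⟨F, hF⟩ := (LinearMap.range_eq_top.1 hVM) xibar
  set G : ∀ q, X q →ₗ[k] X q := fun q => gt q - F q ∘ₗ (U q).mkQ with hG
  have hGhom : IsRHom k s t Mm Mm G := by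
    intro a
    ext x
    have h1 := LinearMap.congr_fun (congrFun hF a) (Submodule.Quotient.mk x)
    rw [dMap_app] at h1
    rw [quotRep_mk] at h1
    have h2 : (U (s a)).liftQ (dMap k s t Mm Mm gt a) (hker a) (Submodule.Quotient.mk x)
        = dMap k s t Mm Mm gt a x := rfl
    simp only [hxibar, h2] at h1
    simp only [hG, LinearMap.comp_apply, LinearMap.sub_apply, Submodule.mkQ_apply,
      dMap_app] at h1 ⊢
    rw [map_sub, sub_eq_sub_iff_sub_eq_sub]
    exact h1.symm
  obtain ⟨c, hc⟩ := hEnd _ hGhom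
  refine ⟨c, fun q => ?_⟩
  ext x
  have h2 := LinearMap.congr_fun (hc q) (x : X q)
  have h3 : pr q (x : X q) = x := by
    have := LinearMap.congr_fun (hpr q) x
    simpa using this
  have h4 : ((U q).mkQ) (x : X q) = 0 := by
    simpa using (Submodule.Quotient.mk_eq_zero _).2 x.2
  simp only [hG, hgt, LinearMap.sub_apply, LinearMap.comp_apply, h3, h4, map_zero,
    sub_zero, LinearMap.smul_apply, LinearMap.id_apply] at h2
  simpa using h2

/-- Hom(M/U, U) = 0. -/
lemma homZero_quot_sub (hEnd : EndTrivial k s t Mm) (hnz : ∃ q, U q ≠ ⊥) :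
    HomZero k s t (quotRep s t Mm U hU) (subRep s t Mm U hU) := by
  intro f hf
  have hFhom : IsRHom k s t (quotRep s t Mm U hU) Mm (fun q => (U q).subtype ∘ₗ f q) := by
    intro a
    ext y
    have h1 := LinearMap.congr_fun (hf a) (Submodule.Quotient.mk y)
    simp only [LinearMap.comp_apply, Submodule.mkQ_apply] at h1 ⊢
    rw [h1]
    rfl
  have h0 := homZero_quot_M s t Mm U hU hEnd hnz _ hFhom
  funext q
  have h2 : (U q).subtype ∘ₗ f q = 0 := by
    have := congrFun h0 q
    simpa using this
  refine LinearMap.ext fun z => Subtype.ext ?_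
  have h3 := LinearMap.congr_fun h2 z
  simpa using h3

/-- Hom(U, M/U) = 0. -/
lemma homZero_sub_quot (hEnd : EndTrivial k s t Mm)
    (hMU : LinearMap.range (dMap k s t Mm (subRep s t Mm U hU)) = ⊤)
    (hVM : LinearMap.range (dMap k s t (quotRep s t Mm U hU) Mm) = ⊤) :
    HomZero k s t (subRep s t Mm U hU) (quotRep s t Mm U hU) := by
  intro f hf
  have hsig : ∀ q, ∃ sig : (X q ⧸ U q) →ₗ[k] X q, (U q).mkQ ∘ₗ sig = LinearMap.id :=
    fun q => (U q).mkQ.exists_rightInverse_of_surjective (Submodule.range_mkQ _)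
  choose sig hsig using hsig
  set g : ∀ q, (U q) →ₗ[k] X q := fun q => sig q ∘ₗ f q with hgdef
  have hgf : ∀ q (x : U q), (U q).mkQ (g q x) = f q x := by
    intro q x
    have := LinearMap.congr_fun (hsig q) (f q x)
    simp at this; exact this
  have hker : ∀ a (x : U (s a)),
      g (t a) (subRep s t Mm U hU a x) - Mm a (g (s a) x) ∈ U (t a) := by
    intro a x
    rw [← Submodule.Quotient.mk_eq_zero]
    have h1 := LinearMap.congr_fun (hf a) x
    simp only [LinearMap.comp_apply] at h1
    have h2 : (Submodule.Quotient.mk (g (t a) (subRep s t Mm U hU a x)) : X (t a) ⧸ U (t a))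
        = f (t a) (subRep s t Mm U hU a x) := hgf (t a) _
    have h3 : (Submodule.Quotient.mk (Mm a (g (s a) x)) : X (t a) ⧸ U (t a))
        = quotRep s t Mm U hU a (Submodule.Quotient.mk (g (s a) x)) :=
      (quotRep_mk s t Mm U hU a _).symm
    have h4 : (Submodule.Quotient.mk (g (s a) x) : X (s a) ⧸ U (s a)) = f (s a) x :=
      hgf (s a) _
    rw [Submodule.Quotient.mk_sub, h2, h3, h4, h1, sub_self]
  set zeta : RSp k s t (fun q => ↥(U q)) (fun q => ↥(U q)) :=
    fun a => LinearMap.codRestrict (U (t a))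
      ((g (t a) ∘ₗ subRep s t Mm U hU a) - (Mm a ∘ₗ g (s a)))
      (fun x => by simpa using hker a x) with hzeta
  obtain ⟨h, hh⟩ :=
    (LinearMap.range_eq_top.1 (range_dMap_sub_sub_eq_top s t Mm U hU hMU)) zeta
  set g' : ∀ q, (U q) →ₗ[k] X q := fun q => g q - (U q).subtype ∘ₗ h q with hg'def
  have hg'hom : IsRHom k s t (subRep s t Mm U hU) Mm g' := by
    intro a
    ext x
    have h1 := congrArg Subtype.val (LinearMap.congr_fun (congrFun hh a) x)
    simp only [dMap_app] at h1
    -- h1 : ↑(h (t a) (subRep a x)) - ↑(subRep a (h (s a) x)) = ↑(zeta a x)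
    have h2 : ((zeta a x : X (t a))) = g (t a) (subRep s t Mm U hU a x) - Mm a (g (s a) x) :=
      rfl
    have h3 : ((subRep s t Mm U hU a (h (s a) x) : X (t a))) = Mm a (h (s a) x : X (s a)) :=
      rfl
    rw [h2] at h1
    simp only [hg'def, LinearMap.comp_apply, LinearMap.sub_apply, map_sub]
    rw [sub_eq_sub_iff_sub_eq_sub]
    calc (g (t a)) ((subRep s t Mm U hU a) x) - (Mm a) ((g (s a)) x)
        = ((zeta a x : X (t a))) := h2.symm
      _ = ((h (t a)) ((subRep s t Mm U hU a) x) : X (t a))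
            - ((subRep s t Mm U hU a) ((h (s a)) x) : X (t a)) := by
          rw [← h2] at h1; exact h1.symm
      _ = (U (t a)).subtype ((h (t a)) ((subRep s t Mm U hU a) x))
            - (Mm a) ((U (s a)).subtype ((h (s a)) x)) := by rw [h3]; rfl
  obtain ⟨c, hc⟩ := hom_sub_to_M s t Mm U hU hEnd hVM g' hg'hom
  funext q
  ext x
  have e1 : f q x = (U q).mkQ (g q x) := (hgf q x).symm
  have e2 : g q x = g' q x + (U q).subtype (h q x) := by
    simp [hg'def]
  have e3 : (U q).mkQ ((U q).subtype (h q x)) = 0 := by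
    simpa using (Submodule.Quotient.mk_eq_zero _).2 (h q x).2
  have e4 : g' q x = c • ((U q).subtype x) := by
    rw [hc q]; rfl
  have e5 : (U q).mkQ ((U q).subtype x) = 0 := by
    simpa using (Submodule.Quotient.mk_eq_zero _).2 x.2
  rw [e1, e2, map_add, e3, add_zero, e4, map_smul, e5, smul_zero]
  rfl

/-- If Ext(M,U) = 0 and End(M) = k then End(M/U) = k. -/
lemma endTrivial_quot (hEnd : EndTrivial k s t Mm)
    (hMU : LinearMap.range (dMap k s t Mm (subRep s t Mm U hU)) = ⊤) :
    EndTrivial k s t (quotRep s t Mm U hU) := by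
  intro psi hpsi
  have hsig : ∀ q, ∃ sig : (X q ⧸ U q) →ₗ[k] X q, (U q).mkQ ∘ₗ sig = LinearMap.id :=
    fun q => (U q).mkQ.exists_rightInverse_of_surjective (Submodule.range_mkQ _)
  choose sig hsig using hsig
  set g : ∀ q, X q →ₗ[k] X q := fun q => sig q ∘ₗ psi q ∘ₗ (U q).mkQ with hgdef
  have hgmk : ∀ q (x : X q), (U q).mkQ (g q x) = psi q (Submodule.Quotient.mk x) := by
    intro q x
    have := LinearMap.congr_fun (hsig q) (psi q (Submodule.Quotient.mk x))
    simp at this; exact this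
  have hker : ∀ a (x : X (s a)), g (t a) (Mm a x) - Mm a (g (s a) x) ∈ U (t a) := by
    intro a x
    rw [← Submodule.Quotient.mk_eq_zero]
    have h1 := LinearMap.congr_fun (hpsi a) (Submodule.Quotient.mk x)
    simp only [LinearMap.comp_apply] at h1
    have h2 : (Submodule.Quotient.mk (g (t a) (Mm a x)) : X (t a) ⧸ U (t a))
        = psi (t a) (Submodule.Quotient.mk (Mm a x)) := hgmk (t a) _
    have h3 : (Submodule.Quotient.mk (Mm a (g (s a) x)) : X (t a) ⧸ U (t a))
        = quotRep s t Mm U hU a (Submodule.Quotient.mk (g (s a) x)) :=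
      (quotRep_mk s t Mm U hU a _).symm
    have h4 : (Submodule.Quotient.mk (g (s a) x) : X (s a) ⧸ U (s a))
        = psi (s a) (Submodule.Quotient.mk x) := hgmk (s a) _
    rw [Submodule.Quotient.mk_sub, h2, h3, h4, ← quotRep_mk s t Mm U hU a x, h1, sub_self]
  set zeta : RSp k s t X (fun q => ↥(U q)) :=
    fun a => LinearMap.codRestrict (U (t a))
      ((g (t a) ∘ₗ Mm a) - (Mm a ∘ₗ g (s a)))
      (fun x => by simpa using hker a x) with hzeta
  obtain ⟨p, hp⟩ := (LinearMap.range_eq_top.1 hMU) zeta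
  set G : ∀ q, X q →ₗ[k] X q := fun q => g q - (U q).subtype ∘ₗ p q with hGdef
  have hGhom : IsRHom k s t Mm Mm G := by
    intro a
    ext x
    have h1 := congrArg Subtype.val (LinearMap.congr_fun (congrFun hp a) x)
    simp only [dMap_app] at h1
    have h2 : ((zeta a x : X (t a))) = g (t a) (Mm a x) - Mm a (g (s a) x) := rfl
    have h3 : ((subRep s t Mm U hU a (p (s a) x) : X (t a))) = Mm a (p (s a) x : X (s a)) :=
      rfl
    rw [h2] at h1
    simp only [hGdef, LinearMap.comp_apply, LinearMap.sub_apply, map_sub]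
    rw [sub_eq_sub_iff_sub_eq_sub]
    calc (g (t a)) ((Mm a) x) - (Mm a) ((g (s a)) x)
        = ((zeta a x : X (t a))) := h2.symm
      _ = ((p (t a)) ((Mm a) x) : X (t a))
            - ((subRep s t Mm U hU a) ((p (s a)) x) : X (t a)) := by
          rw [← h2] at h1; exact h1.symm
      _ = (U (t a)).subtype ((p (t a)) ((Mm a) x))
            - (Mm a) ((U (s a)).subtype ((p (s a)) x)) := by rw [h3]; rfl
  obtain ⟨c, hc⟩ := hEnd _ hGhom
  refine ⟨c, fun q => ?_⟩
  apply Submodule.linearMap_qext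
  refine LinearMap.ext fun x => ?_
  have e1 := LinearMap.congr_fun (hc q) x
  simp only [hGdef, LinearMap.sub_apply, LinearMap.comp_apply, LinearMap.smul_apply,
    LinearMap.id_apply] at e1
  have e2 : (U q).mkQ (g q x) = psi q (Submodule.Quotient.mk x) := hgmk q x
  have e3 : (U q).mkQ ((U q).subtype (p q x)) = 0 := by
    simpa using (Submodule.Quotient.mk_eq_zero _).2 (p q x).2
  have e4 : g q x - (U q).subtype (p q x) = c • x := e1
  have : (U q).mkQ (g q x - (U q).subtype (p q x)) = (U q).mkQ (c • x) := by rw [e4]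
  rw [map_sub, e2, e3, sub_zero, map_smul] at this
  simpa using this

end QAux

end Aux3
section Aux4
set_option linter.unusedSectionVars false
set_option maxHeartbeats 1000000

open Module Submodule LinearMap QuivRep

namespace QAux

variable {k : Type} [Field k] {V A : Type} (s t : A → V) [Fintype V] [Fintype A]

lemma euler_add_left {β u v w : V → ℕ} (h : ∀ q, w q = u q + v q) :
    euler s t w β = euler s t u β + euler s t v β := by
  unfold euler
  simp only [h, Nat.cast_add, add_mul]
  rw [Finset.sum_add_distrib, Finset.sum_add_distrib]
  ring

lemma euler_add_right {β u v w : V → ℕ} (h : ∀ q, w q = u q + v q) :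
    euler s t β w = euler s t β u + euler s t β v := by
  unfold euler
  simp only [h, Nat.cast_add, mul_add]
  rw [Finset.sum_add_distrib, Finset.sum_add_distrib]
  ring

lemma thetaD_add {δ u v w : V → ℕ} (h : ∀ q, w q = u q + v q) :
    thetaD s t δ w = thetaD s t δ u + thetaD s t δ v := by
  unfold thetaD
  rw [euler_add_left s t h, euler_add_right s t h]
  ring

variable {X : V → Type}
  [∀ q, AddCommGroup (X q)] [∀ q, Module k (X q)] [∀ q, FiniteDimensional k (X q)]
  (Mm : RSp k s t X X) (U : ∀ q, Submodule k (X q)) (hU : IsSubRep k s t Mm U)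

lemma theta_eq {δ : V → ℕ} (hiso : euler s t δ δ = 0)
    (hdim : ∀ q, finrank k (X q) = δ q) (hEnd : EndTrivial k s t Mm)
    (hnz : ∃ q, U q ≠ ⊥) (hproper : ¬ ∀ q, U q = ⊤) :
    thetaD s t δ (fun q => finrank k (U q))
      = (finrank k ((RSp k s t (fun q => X q ⧸ U q) X) ⧸
          LinearMap.range (dMap k s t (quotRep s t Mm U hU) Mm)) : ℤ)
        + (finrank k ((RSp k s t X (fun q => ↥(U q))) ⧸
            LinearMap.range (dMap k s t Mm (subRep s t Mm U hU))) : ℤ) := by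
  have huv : ∀ q, δ q = finrank k (U q) + finrank k (X q ⧸ U q) := by
    intro q
    have h1 := Submodule.finrank_quotient_add_finrank (U q)
    have h2 := hdim q
    omega
  have hVM := euler_eq_hom_sub_ext s t (quotRep s t Mm U hU) Mm
  have hMU := euler_eq_hom_sub_ext s t Mm (subRep s t Mm U hU)
  have hhVM := finrank_ker_of_homZero s t (homZero_quot_M s t Mm U hU hEnd hnz)
  have hhMU := finrank_ker_of_homZero s t (homZero_M_sub s t Mm U hU hEnd hproper)
  have hd : (fun q => finrank k (X q)) = δ := funext hdim
  rw [hd, hhVM] at hVM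
  rw [hd, hhMU] at hMU
  have hadd : euler s t δ δ
      = euler s t (fun q => finrank k (U q)) δ
        + euler s t (fun q => finrank k (X q ⧸ U q)) δ := euler_add_left s t huv
  unfold thetaD
  rw [hiso] at hadd
  push_cast at hVM hMU ⊢
  linarith [hVM, hMU, hadd]

lemma part1 {δ : V → ℕ} (hiso : euler s t δ δ = 0)
    (hdim : ∀ q, finrank k (X q) = δ q) (hEnd : EndTrivial k s t Mm) :
    ∀ (W : ∀ q, Submodule k (X q)), IsSubRep k s t Mm W →
      0 ≤ thetaD s t δ (fun q => finrank k (W q)) := by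
  intro W hW
  by_cases hnz : ∃ q, W q ≠ ⊥
  · by_cases hproper : ∀ q, W q = ⊤
    · have he : (fun q => finrank k (W q)) = δ := by
        funext q
        rw [hproper q, finrank_top, hdim q]
      rw [he]
      unfold thetaD
      omega
    · rw [theta_eq s t Mm W hW hiso hdim hEnd hnz hproper]
      positivity
  · push_neg at hnz
    have he : (fun q => finrank k (W q)) = fun _ => 0 := by
      funext q
      rw [hnz q]
      exact finrank_bot k _
    rw [he]
    simp [thetaD, euler]

end QAux

end Aux4
section Aux5
set_option linter.unusedSectionVars false
set_option maxHeartbeats 1000000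

open Module Submodule LinearMap QuivRep

namespace QAux

variable {k : Type} [Field k] {V A : Type} (s t : A → V) [Fintype V] [Fintype A]
variable {X : V → Type}
  [∀ q, AddCommGroup (X q)] [∀ q, Module k (X q)] [∀ q, FiniteDimensional k (X q)]

/-- Transport: every indecomposable of dimension vector δ is Schurian, via `hsl`. -/
lemma endTrivial_transport {δ : V → ℕ}
    (Mm : RSp k s t X X) (hdim : ∀ q, Module.finrank k (X q) = δ q)
    (hsl : ∀ m : RSp k s t (stdSp k δ) (stdSp k δ), Indec k s t m → EndTrivial k s t m)
    (hind : Indec k s t Mm) : EndTrivial k s t Mm := by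
  classical
  set e : ∀ q, X q ≃ₗ[k] (stdSp k δ q) :=
    fun q => (Module.finBasisOfFinrankEq k (X q) (hdim q)).equivFun with he
  set m : RSp k s t (stdSp k δ) (stdSp k δ) :=
    fun a => (e (t a)).toLinearMap ∘ₗ Mm a ∘ₗ (e (s a)).symm.toLinearMap with hm
  have hindm : Indec k s t m := by
    constructor
    · obtain ⟨q, x, hx⟩ := hind.1
      refine ⟨q, e q x, fun h => hx ?_⟩
      have h2 := congrArg (e q).symm h
      simpa using h2
    · intro P W hP hW hinf hsup
      have key : ∀ (P : ∀ q, Submodule k (stdSp k δ q)), IsSubRep k s t m P →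
          IsSubRep k s t Mm (fun q => (P q).comap (e q).toLinearMap) := by
        intro P hP a x hx
        have h3 : m a (e (s a) x) ∈ P (t a) := hP a _ hx
        simp only [hm, LinearMap.comp_apply, LinearEquiv.coe_coe,
          LinearEquiv.symm_apply_apply] at h3
        simpa [Submodule.mem_comap] using h3
      have h2 := hind.2 _ _ (key P hP) (key W hW)
        (fun q => by
          rw [← Submodule.comap_inf, hinf q, Submodule.comap_bot]
          exact LinearMap.ker_eq_bot.2 (e q).injective)
        (fun q => by
          rw [Submodule.comap_equiv_eq_map_symm, Submodule.comap_equiv_eq_map_symm,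
            ← Submodule.map_sup, hsup q]
          simpa using Submodule.map_top (e q).symm.toLinearMap)
      have conv : ∀ (P : ∀ q, Submodule k (stdSp k δ q)),
          (∀ q, (P q).comap (e q).toLinearMap = ⊥) → ∀ q, P q = ⊥ := by
        intro P hP q
        rw [Submodule.eq_bot_iff]
        intro y hy
        have h4 : (e q).symm y ∈ (P q).comap (e q).toLinearMap := by
          simpa [Submodule.mem_comap] using hy
        rw [hP q] at h4
        have h5 : (e q).symm y = 0 := h4
        have h6 := congrArg (e q) h5
        simpa using h6
      rcases h2 with h | h
      · exact Or.inl (conv P h)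
      · exact Or.inr (conv W h)
  intro f hf
  have hF : IsRHom k s t m m (fun q => (e q).toLinearMap ∘ₗ f q ∘ₗ (e q).symm.toLinearMap) := by
    intro a
    refine LinearMap.ext fun y => ?_
    simp only [hm, LinearMap.comp_apply, LinearEquiv.coe_coe, LinearEquiv.symm_apply_apply]
    have h1 := LinearMap.congr_fun (hf a) ((e (s a)).symm y)
    simp only [LinearMap.comp_apply] at h1
    rw [h1]
  obtain ⟨c, hc⟩ := hsl m hindm _ hF
  refine ⟨c, fun q => ?_⟩
  ext x
  have h1 := LinearMap.congr_fun (hc q) (e q x)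
  simp only [LinearMap.comp_apply, LinearEquiv.coe_coe, LinearEquiv.symm_apply_apply,
    LinearMap.smul_apply, LinearMap.id_apply] at h1
  have h2 := congrArg (e q).symm h1
  simpa using h2

/-- A nontrivial subrepresentation of an indecomposable admits no splitting. -/
lemma nonsplit (Mm : RSp k s t X X) (U : ∀ q, Submodule k (X q)) (hU : IsSubRep k s t Mm U)
    (hind : Indec k s t Mm) (hnz : ∃ q, U q ≠ ⊥) (hproper : ¬ ∀ q, U q = ⊤) :
    ¬ ∃ σ : ∀ q, (X q ⧸ U q) →ₗ[k] X q,
        IsRHom k s t (quotRep s t Mm U hU) Mm σ ∧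
        ∀ q, (U q).mkQ.comp (σ q) = LinearMap.id := by
  rintro ⟨σ, hσhom, hσsec⟩
  have hWsub : IsSubRep k s t Mm (fun q => LinearMap.range (σ q)) := by
    intro a x hx
    obtain ⟨y, rfl⟩ := hx
    have h1 := LinearMap.congr_fun (hσhom a) y
    simp only [LinearMap.comp_apply] at h1
    exact ⟨quotRep s t Mm U hU a y, h1⟩
  have hinf : ∀ q, U q ⊓ LinearMap.range (σ q) = ⊥ := by
    intro q
    rw [Submodule.eq_bot_iff]
    rintro x ⟨hxU, y, rfl⟩
    have h1 : (U q).mkQ (σ q y) = y := LinearMap.congr_fun (hσsec q) y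
    have h2 : (U q).mkQ (σ q y) = 0 := by
      simpa using (Submodule.Quotient.mk_eq_zero _).2 hxU
    rw [h1] at h2
    rw [h2, map_zero]
  have hsup : ∀ q, U q ⊔ LinearMap.range (σ q) = ⊤ := by
    intro q
    rw [Submodule.eq_top_iff']
    intro x
    have h1 : x - σ q ((U q).mkQ x) ∈ U q := by
      rw [← Submodule.Quotient.mk_eq_zero, Submodule.Quotient.mk_sub]
      have h2 : (U q).mkQ (σ q ((U q).mkQ x)) = (U q).mkQ x :=
        LinearMap.congr_fun (hσsec q) ((U q).mkQ x)
      rw [sub_eq_zero]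
      simpa using h2.symm
    have : x = (x - σ q ((U q).mkQ x)) + σ q ((U q).mkQ x) := by abel
    rw [this]
    exact Submodule.add_mem_sup h1 ⟨(U q).mkQ x, rfl⟩
  rcases hind.2 U _ hU hWsub hinf hsup with h | h
  · obtain ⟨q, hq⟩ := hnz
    exact hq (h q)
  · apply hproper
    intro q
    have hσ0 : σ q = 0 := LinearMap.range_eq_bot.1 (h q)
    by_contra hq
    have : Nontrivial (X q ⧸ U q) :=
      (Submodule.Quotient.nontrivial_iff).2 hq
    obtain ⟨y1, y2, hy⟩ := this
    have e1 : ∀ y : X q ⧸ U q, y = 0 := by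
      intro y
      have := LinearMap.congr_fun (hσsec q) y
      simp only [LinearMap.comp_apply, hσ0, LinearMap.zero_apply, map_zero,
        LinearMap.id_apply] at this
      exact this.symm
    exact hy (by rw [e1 y1, e1 y2])

end QAux

end Aux5
section Aux6
set_option linter.unusedSectionVars false
set_option maxHeartbeats 1000000

open Module Submodule LinearMap QuivRep

namespace QAux

variable {k : Type} [Field k] {V A : Type} (s t : A → V) [Fintype V] [Fintype A]
variable {X : V → Type}
  [∀ q, AddCommGroup (X q)] [∀ q, Module k (X q)] [∀ q, FiniteDimensional k (X q)]
  (Mm : RSp k s t X X) (U : ∀ q, Submodule k (X q)) (hU : IsSubRep k s t Mm U)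

lemma split_of_bot (hbot : ∀ q, U q = ⊥) :
    ∃ σ : ∀ q, (X q ⧸ U q) →ₗ[k] X q,
      IsRHom k s t (quotRep s t Mm U hU) Mm σ ∧
      ∀ q, (U q).mkQ.comp (σ q) = LinearMap.id := by
  refine ⟨fun q => ((U q).quotEquivOfEqBot (hbot q)).toLinearMap, ?_, ?_⟩
  · intro a
    apply Submodule.linearMap_qext
    refine LinearMap.ext fun x => ?_
    simp only [LinearMap.comp_apply, Submodule.mkQ_apply, LinearEquiv.coe_coe]
    rw [quotRep_mk]
    rw [Submodule.quotEquivOfEqBot_apply_mk, Submodule.quotEquivOfEqBot_apply_mk]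
  · intro q
    apply Submodule.linearMap_qext
    refine LinearMap.ext fun x => ?_
    simp only [LinearMap.comp_apply, Submodule.mkQ_apply, LinearEquiv.coe_coe,
      LinearMap.id_apply]
    rw [Submodule.quotEquivOfEqBot_apply_mk]

lemma split_of_top (htop : ∀ q, U q = ⊤) :
    ∃ σ : ∀ q, (X q ⧸ U q) →ₗ[k] X q,
      IsRHom k s t (quotRep s t Mm U hU) Mm σ ∧
      ∀ q, (U q).mkQ.comp (σ q) = LinearMap.id := by
  refine ⟨fun q => 0, ?_, ?_⟩
  · intro a
    ext x
    simp
  · intro q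
    haveI : Subsingleton (X q ⧸ U q) :=
      Submodule.Quotient.subsingleton_iff.mpr (htop q)
    exact Subsingleton.elim _ _

lemma range_eq_top_of_coker {M N : Type} [AddCommGroup M] [AddCommGroup N]
    [Module k M] [Module k N] [FiniteDimensional k N] (f : M →ₗ[k] N)
    (h : finrank k (N ⧸ LinearMap.range f) = 0) :
    LinearMap.range f = ⊤ := by
  have h4 := Submodule.finrank_quotient_add_finrank (LinearMap.range f)
  exact Submodule.eq_top_of_finrank_eq (by omega)

/-- A minimal nonzero subrepresentation with θ ≤ 0 has trivial endomorphisms. -/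
lemma endTrivial_sub_min [IsAlgClosed k] {δ : V → ℕ}
    (hsemi : ∀ (W : ∀ q, Submodule k (X q)), IsSubRep k s t Mm W →
      0 ≤ thetaD s t δ (fun q => finrank k (W q)))
    (hmin : ∀ (W : ∀ q, Submodule k (X q)), IsSubRep k s t Mm W → (∃ q, W q ≠ ⊥) →
      thetaD s t δ (fun q => finrank k (W q)) ≤ 0 →
      (∑ q, finrank k (U q)) ≤ ∑ q, finrank k (W q))
    (hnz : ∃ q, U q ≠ ⊥)
    (hth : thetaD s t δ (fun q => finrank k (U q)) = 0) :
    EndTrivial k s t (subRep s t Mm U hU) := by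
  intro φ hφ
  obtain ⟨q1, hq1⟩ := hnz
  haveI : Nontrivial (U q1) := Submodule.nontrivial_iff_ne_bot.mpr hq1
  obtain ⟨c, hc⟩ := Module.End.exists_eigenvalue (φ q1)
  obtain ⟨x0, hx0⟩ := hc.exists_hasEigenvector
  set ψ : ∀ q, (U q) →ₗ[k] (U q) := fun q => φ q - c • LinearMap.id with hψdef
  have hψhom : IsRHom k s t (subRep s t Mm U hU) (subRep s t Mm U hU) ψ := by
    intro a
    ext x
    have h1 := LinearMap.congr_fun (hφ a) x
    simp only [LinearMap.comp_apply] at h1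
    simp only [hψdef, LinearMap.comp_apply, LinearMap.sub_apply, LinearMap.smul_apply,
      LinearMap.id_apply, map_sub, map_smul, h1]
  suffices hψ0 : ψ = 0 by
    refine ⟨c, fun q => ?_⟩
    have h2 := congrFun hψ0 q
    have h3 : φ q - c • LinearMap.id = 0 := h2
    rw [sub_eq_zero] at h3
    exact h3
  by_contra hne
  have hex : ∃ q2, ψ q2 ≠ 0 := by
    by_contra h
    push_neg at h
    exact hne (funext fun q => h q)
  obtain ⟨q2, hq2⟩ := hex
  set Kf : ∀ q, Submodule k (X q) := fun q => (LinearMap.ker (ψ q)).map (U q).subtype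
    with hKf
  set If : ∀ q, Submodule k (X q) := fun q => (LinearMap.range (ψ q)).map (U q).subtype
    with hIf
  have hψcomm : ∀ a (u : U (s a)),
      ψ (t a) (subRep s t Mm U hU a u) = subRep s t Mm U hU a (ψ (s a) u) := by
    intro a u
    have h1 := LinearMap.congr_fun (hψhom a) u
    simpa using h1
  have hKsub : IsSubRep k s t Mm Kf := by
    intro a x hx
    obtain ⟨u, hu, rfl⟩ := hx
    refine ⟨subRep s t Mm U hU a u, ?_, rfl⟩
    simp only [SetLike.mem_coe, LinearMap.mem_ker] at hu ⊢
    rw [hψcomm a u, hu, map_zero]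
  have hIsub : IsSubRep k s t Mm If := by
    intro a x hx
    obtain ⟨w, hw, rfl⟩ := hx
    obtain ⟨u, rfl⟩ := hw
    refine ⟨subRep s t Mm U hU a (ψ (s a) u), ?_, rfl⟩
    simp only [SetLike.mem_coe, LinearMap.mem_range]
    exact ⟨subRep s t Mm U hU a u, hψcomm a u⟩
  have hdK : ∀ q, finrank k (Kf q) = finrank k (LinearMap.ker (ψ q)) := fun q =>
    Submodule.finrank_map_subtype_eq (U q) _
  have hdI : ∀ q, finrank k (If q) = finrank k (LinearMap.range (ψ q)) := fun q =>
    Submodule.finrank_map_subtype_eq (U q) _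
  have hsum : ∀ q, finrank k (U q) = finrank k (Kf q) + finrank k (If q) := by
    intro q
    have h1 := LinearMap.finrank_range_add_finrank_ker (ψ q)
    rw [hdK q, hdI q]
    omega
  have hadd := thetaD_add s t (δ := δ) hsum
  have hK0 := hsemi Kf hKsub
  have hI0 := hsemi If hIsub
  have hIth : thetaD s t δ (fun q => finrank k (If q)) ≤ 0 := by linarith [hth.le, hadd]
  have hInz : ∃ q, If q ≠ ⊥ := by
    refine ⟨q2, fun h => hq2 ?_⟩
    refine LinearMap.ext fun y => Subtype.ext ?_
    have h1 : ((U q2).subtype (ψ q2 y)) ∈ If q2 := ⟨ψ q2 y, ⟨y, rfl⟩, rfl⟩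
    rw [h] at h1
    have h2 : (ψ q2 y : X q2) = 0 := h1
    simpa using h2
  have hle := hmin If hIsub hInz hIth
  have hptle : ∀ q, finrank k (If q) ≤ finrank k (U q) := fun q =>
    Submodule.finrank_mono (Submodule.map_subtype_le (U q) _)
  have heq1 : finrank k (If q1) = finrank k (U q1) := by
    by_contra hq
    have hlt : finrank k (If q1) < finrank k (U q1) := lt_of_le_of_ne (hptle q1) hq
    have hstrict : (∑ q, finrank k (If q)) < ∑ q, finrank k (U q) :=
      Finset.sum_lt_sum (fun i _ => hptle i) ⟨q1, Finset.mem_univ q1, hlt⟩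
    omega
  have h5 : finrank k (LinearMap.range (ψ q1)) = finrank k (U q1) := by
    rw [← hdI q1]; exact heq1
  have h6 : LinearMap.range (ψ q1) = ⊤ := Submodule.eq_top_of_finrank_eq h5
  have h7 : ψ q1 x0 = 0 := by
    have := hx0.apply_eq_smul
    simp only [hψdef, LinearMap.sub_apply, LinearMap.smul_apply, LinearMap.id_apply, this,
      sub_self]
  have h9 := LinearMap.finrank_range_add_finrank_ker (ψ q1)
  have h10 : finrank k (LinearMap.ker (ψ q1)) = 0 := by
    have hU1 : finrank k (⊤ : Submodule k (U q1)) = finrank k (U q1) := finrank_top k _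
    omega
  have h11 : LinearMap.ker (ψ q1) = ⊥ := Submodule.finrank_eq_zero.1 h10
  have h12 : x0 ∈ LinearMap.ker (ψ q1) := LinearMap.mem_ker.2 h7
  rw [h11] at h12
  exact hx0.2 h12

lemma finrank_coker_zero {M N : Type} [AddCommGroup M] [AddCommGroup N]
    [Module k M] [Module k N] [FiniteDimensional k N] (f : M →ₗ[k] N)
    (h : LinearMap.range f = ⊤) :
    finrank k (N ⧸ LinearMap.range f) = 0 := by
  have h4 := Submodule.finrank_quotient_add_finrank (LinearMap.range f)
  have h5 : finrank k (LinearMap.range f) = finrank k N := by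
    rw [h]; exact finrank_top k N
  omega

end QAux

end Aux6

set_option maxHeartbeats 1000000


/-- Lemma `isotropic`.  Let `δ` be an isotropic Schur root with
`sl(δ) = 1`.  Then every indecomposable representation `M` of dimension vector `δ` is
`Θ_δ`-semistable, and `M` fails to be `Θ_δ`-stable if and only if there is a non-split
short exact sequence `0 → U → M → V → 0` with `U`, `V` exceptional,
`Hom(U,V) = Hom(V,U) = 0` and `dim Ext(U,V) = dim Ext(V,U) = 1`. -/
theorem statement19 {k : Type} [Field k] [IsAlgClosed k]
    {V A : Type} [Fintype V] [Fintype A] (s t : A → V)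
    (δ : V → ℕ)
    -- δ is isotropic
    (hiso : euler s t δ δ = 0)
    -- δ is a Schur root
    (hschurroot : ∃ m : RSp k s t (stdSp k δ) (stdSp k δ), EndTrivial k s t m)
    -- sl(δ) = 1 : every indecomposable of dimension vector δ is Schurian
    (hsl : ∀ m : RSp k s t (stdSp k δ) (stdSp k δ), Indec k s t m →
      EndTrivial k s t m)
    -- an indecomposable representation M of dimension vector δ
    {X : V → Type}
    [∀ q, AddCommGroup (X q)] [∀ q, Module k (X q)] [∀ q, FiniteDimensional k (X q)]
    (Mm : RSp k s t X X) (hdim : ∀ q, Module.finrank k (X q) = δ q)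
    (hind : Indec k s t Mm) :
    -- (1) M is Θ_δ-semistable
    (∀ U : ∀ q, Submodule k (X q), IsSubRep k s t Mm U →
      0 ≤ thetaD s t δ (fun q => Module.finrank k (U q))) ∧
    -- (2) M is not Θ_δ-stable iff it is a non-split extension of exceptionals
    (¬ (∀ U : ∀ q, Submodule k (X q), IsSubRep k s t Mm U → (∃ q, U q ≠ ⊥) →
        (¬ ∀ q, U q = ⊤) → 0 < thetaD s t δ (fun q => Module.finrank k (U q))) ↔
      ∃ (U : ∀ q, Submodule k (X q)) (hU : IsSubRep k s t Mm U),
        -- the sequence 0 → U → M → M/U → 0 is non-split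
        (¬ ∃ σ : ∀ q, (X q ⧸ U q) →ₗ[k] X q,
          IsRHom k s t (quotRep s t Mm U hU) Mm σ ∧
          ∀ q, (U q).mkQ.comp (σ q) = LinearMap.id) ∧
        -- U is exceptional
        EndTrivial k s t (subRep s t Mm U hU) ∧
        LinearMap.range (dMap k s t (subRep s t Mm U hU) (subRep s t Mm U hU)) = ⊤ ∧
        -- V = M/U is exceptional
        EndTrivial k s t (quotRep s t Mm U hU) ∧
        LinearMap.range (dMap k s t (quotRep s t Mm U hU) (quotRep s t Mm U hU)) = ⊤ ∧
        -- Hom(U,V) = Hom(V,U) = 0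
        HomZero k s t (subRep s t Mm U hU) (quotRep s t Mm U hU) ∧
        HomZero k s t (quotRep s t Mm U hU) (subRep s t Mm U hU) ∧
        -- dim Ext(U,V) = dim Ext(V,U) = 1
        Module.finrank k
          ((RSp k s t (fun q => ↥(U q)) (fun q => X q ⧸ U q)) ⧸
            LinearMap.range (dMap k s t (subRep s t Mm U hU) (quotRep s t Mm U hU))) = 1 ∧
        Module.finrank k
          ((RSp k s t (fun q => X q ⧸ U q) (fun q => ↥(U q))) ⧸
            LinearMap.range (dMap k s t (quotRep s t Mm U hU) (subRep s t Mm U hU))) = 1) := by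
  classical
  have hEnd : EndTrivial k s t Mm := QAux.endTrivial_transport s t Mm hdim hsl hind
  have hsemi := QAux.part1 s t Mm hiso hdim hEnd
  have huv : ∀ (U : ∀ q, Submodule k (X q)) (q : V),
      δ q = Module.finrank k (U q) + Module.finrank k (X q ⧸ U q) := by
    intro U q
    have h1 := Submodule.finrank_quotient_add_finrank (U q)
    have h2 := hdim q
    omega
  have hd : (fun q => Module.finrank k (X q)) = δ := funext hdim
  refine ⟨hsemi, ?_, ?_⟩
  · -- forward direction
    intro hns
    push_neg at hns
    obtain ⟨U₀, hU₀, hnz₀, hprop₀, hth₀⟩ := hns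
    have hPex : ∃ n : ℕ, ∃ (U : ∀ q, Submodule k (X q)) (_ : IsSubRep k s t Mm U),
        (∃ q, U q ≠ ⊥) ∧ thetaD s t δ (fun q => Module.finrank k (U q)) ≤ 0 ∧
        (∑ q, Module.finrank k (U q)) = n :=
      ⟨_, U₀, hU₀, hnz₀, hth₀, rfl⟩
    obtain ⟨U, hU, hnz, hthle, hn⟩ := Nat.find_spec hPex
    have hmin : ∀ (W : ∀ q, Submodule k (X q)), IsSubRep k s t Mm W → (∃ q, W q ≠ ⊥) →
        thetaD s t δ (fun q => Module.finrank k (W q)) ≤ 0 →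
        (∑ q, Module.finrank k (U q)) ≤ ∑ q, Module.finrank k (W q) := by
      intro W hW h1 h2
      rw [hn]
      exact Nat.find_min' hPex ⟨W, hW, h1, h2, rfl⟩
    have hproper : ¬ ∀ q, U q = ⊤ := by
      intro htop
      obtain ⟨q0, hq0⟩ := hprop₀
      have hlt : (∑ q, Module.finrank k (U₀ q)) < ∑ q, Module.finrank k (X q) :=
        Finset.sum_lt_sum (fun i _ => (U₀ i).finrank_le)
          ⟨q0, Finset.mem_univ _, Submodule.finrank_lt hq0⟩
      have hle2 : (∑ q, Module.finrank k (U q)) ≤ ∑ q, Module.finrank k (U₀ q) := by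
        rw [hn]
        exact Nat.find_min' hPex ⟨U₀, hU₀, hnz₀, hth₀, rfl⟩
      have htopsum : (∑ q, Module.finrank k (U q)) = ∑ q, Module.finrank k (X q) :=
        Finset.sum_congr rfl fun q _ => by rw [htop q, finrank_top]
      omega
    have hth : thetaD s t δ (fun q => Module.finrank k (U q)) = 0 :=
      le_antisymm hthle (hsemi U hU)
    -- the two "outer" Ext groups vanish
    have hteq := QAux.theta_eq s t Mm U hU hiso hdim hEnd hnz hproper
    rw [hth] at hteq
    have hcVM : Module.finrank k ((RSp k s t (fun q => X q ⧸ U q) X) ⧸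
        LinearMap.range (dMap k s t (quotRep s t Mm U hU) Mm)) = 0 := by omega
    have hcMU : Module.finrank k ((RSp k s t X (fun q => ↥(U q))) ⧸
        LinearMap.range (dMap k s t Mm (subRep s t Mm U hU))) = 0 := by omega
    have hsurjVM := QAux.range_eq_top_of_coker _ hcVM
    have hsurjMU := QAux.range_eq_top_of_coker _ hcMU
    -- the structural facts
    have hEndU := QAux.endTrivial_sub_min s t Mm U hU hsemi hmin hnz hth
    have hEndV := QAux.endTrivial_quot s t Mm U hU hEnd hsurjMU
    have hUUtop := QAux.range_dMap_sub_sub_eq_top s t Mm U hU hsurjMU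
    have hUV0 := QAux.homZero_sub_quot s t Mm U hU hEnd hsurjMU hsurjVM
    have hVU0 := QAux.homZero_quot_sub s t Mm U hU hEnd hnz
    have hnonsplit := QAux.nonsplit s t Mm U hU hind hnz hproper
    -- nonzero elements of U and X/U
    have hUnz : ∃ q, ∃ x : (U q : Type), x ≠ 0 := by
      obtain ⟨q1, hq1⟩ := hnz
      obtain ⟨x, hx, hx0⟩ := (Submodule.ne_bot_iff _).1 hq1
      exact ⟨q1, ⟨x, hx⟩, fun h => hx0 (by simpa using congrArg Subtype.val h)⟩
    have hVnz : ∃ q, ∃ z : X q ⧸ U q, z ≠ 0 := by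
      obtain ⟨q0, hq0⟩ := not_forall.1 hproper
      haveI : Nontrivial (X q0 ⧸ U q0) :=
        (Submodule.Quotient.nontrivial_iff).2 hq0
      obtain ⟨z, hz⟩ := exists_ne (0 : X q0 ⧸ U q0)
      exact ⟨q0, z, hz⟩
    -- dimension counting
    have E1 := QAux.euler_eq_hom_sub_ext s t (quotRep s t Mm U hU) Mm
    have E2 := QAux.euler_eq_hom_sub_ext s t Mm (subRep s t Mm U hU)
    have E3 := QAux.euler_eq_hom_sub_ext s t (subRep s t Mm U hU) (subRep s t Mm U hU)
    have E4 := QAux.euler_eq_hom_sub_ext s t (subRep s t Mm U hU) (quotRep s t Mm U hU)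
    have E5 := QAux.euler_eq_hom_sub_ext s t (quotRep s t Mm U hU) (subRep s t Mm U hU)
    have E6 := QAux.euler_eq_hom_sub_ext s t (quotRep s t Mm U hU) (quotRep s t Mm U hU)
    rw [hd] at E1 E2
    rw [QAux.finrank_ker_of_homZero s t (QAux.homZero_quot_M s t Mm U hU hEnd hnz),
      hcVM] at E1
    rw [QAux.finrank_ker_of_homZero s t (QAux.homZero_M_sub s t Mm U hU hEnd hproper),
      hcMU] at E2
    rw [QAux.finrank_ker_dMap_self s t hEndU hUnz,
      QAux.finrank_coker_zero _ hUUtop] at E3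
    rw [QAux.finrank_ker_of_homZero s t hUV0] at E4
    rw [QAux.finrank_ker_of_homZero s t hVU0] at E5
    rw [QAux.finrank_ker_dMap_self s t hEndV hVnz] at E6
    -- euler-form additivity
    have A1 : euler s t δ δ
        = euler s t (fun q => Module.finrank k (U q)) δ
          + euler s t (fun q => Module.finrank k (X q ⧸ U q)) δ :=
      QAux.euler_add_left s t (huv U)
    have A2 : euler s t δ (fun q => Module.finrank k (U q))
        = euler s t (fun q => Module.finrank k (U q)) (fun q => Module.finrank k (U q))
          + euler s t (fun q => Module.finrank k (X q ⧸ U q))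
              (fun q => Module.finrank k (U q)) :=
      QAux.euler_add_left s t (huv U)
    have A3 : euler s t (fun q => Module.finrank k (U q)) δ
        = euler s t (fun q => Module.finrank k (U q)) (fun q => Module.finrank k (U q))
          + euler s t (fun q => Module.finrank k (U q))
              (fun q => Module.finrank k (X q ⧸ U q)) :=
      QAux.euler_add_right s t (huv U)
    have A4 : euler s t (fun q => Module.finrank k (X q ⧸ U q)) δ
        = euler s t (fun q => Module.finrank k (X q ⧸ U q))
            (fun q => Module.finrank k (U q))
          + euler s t (fun q => Module.finrank k (X q ⧸ U q))
              (fun q => Module.finrank k (X q ⧸ U q)) :=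
      QAux.euler_add_right s t (huv U)
    -- solve for the three unknown ext dimensions
    have hExtUV : Module.finrank k
        ((RSp k s t (fun q => ↥(U q)) (fun q => X q ⧸ U q)) ⧸
          LinearMap.range (dMap k s t (subRep s t Mm U hU) (quotRep s t Mm U hU))) = 1 := by
      omega
    have hExtVU : Module.finrank k
        ((RSp k s t (fun q => X q ⧸ U q) (fun q => ↥(U q))) ⧸
          LinearMap.range (dMap k s t (quotRep s t Mm U hU) (subRep s t Mm U hU))) = 1 := by
      omega
    have hcVV : Module.finrank k
        ((RSp k s t (fun q => X q ⧸ U q) (fun q => X q ⧸ U q)) ⧸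
          LinearMap.range (dMap k s t (quotRep s t Mm U hU) (quotRep s t Mm U hU))) = 0 := by
      omega
    have hVVtop := QAux.range_eq_top_of_coker _ hcVV
    exact ⟨U, hU, hnonsplit, hEndU, hUUtop, hEndV, hVVtop, hUV0, hVU0, hExtUV, hExtVU⟩
  · -- backward direction
    rintro ⟨U, hU, hnsplit, hEndU, hUUtop, hEndV, hVVtop, hUV0, hVU0, hExtUV, hExtVU⟩
    intro hstable
    have hnz : ∃ q, U q ≠ ⊥ := by
      by_contra h
      push_neg at h
      exact hnsplit (QAux.split_of_bot s t Mm U hU h)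
    have hproper : ¬ ∀ q, U q = ⊤ := fun h => hnsplit (QAux.split_of_top s t Mm U hU h)
    have h0 := hstable U hU hnz hproper
    have E4 := QAux.euler_eq_hom_sub_ext s t (subRep s t Mm U hU) (quotRep s t Mm U hU)
    have E5 := QAux.euler_eq_hom_sub_ext s t (quotRep s t Mm U hU) (subRep s t Mm U hU)
    rw [QAux.finrank_ker_of_homZero s t hUV0, hExtUV] at E4
    rw [QAux.finrank_ker_of_homZero s t hVU0, hExtVU] at E5
    have A2 : euler s t δ (fun q => Module.finrank k (U q))
        = euler s t (fun q => Module.finrank k (U q)) (fun q => Module.finrank k (U q))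
          + euler s t (fun q => Module.finrank k (X q ⧸ U q))
              (fun q => Module.finrank k (U q)) :=
      QAux.euler_add_left s t (huv U)
    have A3 : euler s t (fun q => Module.finrank k (U q)) δ
        = euler s t (fun q => Module.finrank k (U q)) (fun q => Module.finrank k (U q))
          + euler s t (fun q => Module.finrank k (U q))
              (fun q => Module.finrank k (X q ⧸ U q)) :=
      QAux.euler_add_right s t (huv U)
    unfold thetaD at h0
    omega
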